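/- Suppose the parameter p satisfies the hypotheses of the s_{π/2} corollary: A, B_V, B_H ≠ 0, B_V λ_0 = A τ_V, and A p_0 = B_H τ_V, where A = (λ_H+τ_H)(λ_V+τ_V) - τ_V τ_H, B_V = (p_H+p_V)(λ_V+τ_V) - p_V λ_V, B_H = (p_H+p_V)(λ_H+τ_H) - p_H λ_H. Set ν_V = A/B_V, and define p̃ by λ̃_0 = (A/B_V)τ_V, λ̃_V = (A/B_V)p_H, λ̃_H = λ_V, τ̃_V = (B_H/B_V)τ_V, τ̃_H = τ_V, p̃_V = (B_V/A)λ_H, p̃_H = p_V, p̃_0 = (B_V/A)τ_H. Then the five conditions of the s_{π/2} theorem hold: (1) λ̃_H+τ̃_H = λ_V+τ_V and λ̃_V+τ̃_V = λ_H+τ_H; (2) λ̃_0 = λ_0 = ν_V τ_V, λ̃_V = ν_V p_H, λ̃_H = λ_V; (3) τ̃_V = ν_V p_0 and ν_V τ̃_H = λ_0; (4) ν_V p̃_V = λ_H, p̃_H = p_V, ν_V p̃_0 = τ_H; (5) p̃_V+p̃_H+p̃_0 = p_V+p_H+p_0. -/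

import Mathlib

theorem stmt_14 (l0 lV lH tV tH pV pH p0 : ℝ)
    (hl0 : 0 ≤ l0) (hlV : 0 ≤ lV) (hlH : 0 ≤ lH) (htV : 0 ≤ tV) (htH : 0 ≤ tH)
    (hpV : 0 ≤ pV) (hpV' : pV ≤ 1) (hpH : 0 ≤ pH) (hpH' : pH ≤ 1)
    (hp0 : 0 ≤ p0) (hp0' : p0 ≤ 1)
    (A BV BH : ℝ)
    (hA : A = (lH + tH) * (lV + tV) - tV * tH)
    (hBV : BV = (pH + pV) * (lV + tV) - pV * lV)
    (hBH : BH = (pH + pV) * (lH + tH) - pH * lH)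
    (hA0 : A ≠ 0) (hBV0 : BV ≠ 0) (hBH0 : BH ≠ 0)
    (hrev1 : BV * l0 = A * tV) (hrev2 : A * p0 = BH * tV)
    (νV : ℝ) (hνV : νV = A / BV)
    (tl0 tlV tlH ttV ttH tpV tpH tp0 : ℝ)
    (h1 : tl0 = (A / BV) * tV) (h2 : tlV = (A / BV) * pH) (h3 : tlH = lV)
    (h4 : ttV = (BH / BV) * tV) (h5 : ttH = tV)
    (h6 : tpV = (BV / A) * lH) (h7 : tpH = pV) (h8 : tp0 = (BV / A) * tH) :
    (tlH + ttH = lV + tV ∧ tlV + ttV = lH + tH) ∧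
    (tl0 = l0 ∧ l0 = νV * tV ∧ tlV = νV * pH ∧ tlH = lV) ∧
    (ttV = νV * p0 ∧ νV * ttH = l0) ∧
    (νV * tpV = lH ∧ tpH = pV ∧ νV * tp0 = tH) ∧
    (tpV + tpH + tp0 = pV + pH + p0) := by
  subst hA hBV hBH hνV h1 h2 h3 h4 h5 h6 h7 h8
  have eBV : (tlH + ttH) * (pH + tpH) - tlH * tpH ≠ 0 := by intro h; apply hBV0; linear_combination h
  have eA : (lH + tH) * (tlH + ttH) - tH * ttH ≠ 0 := by intro h; apply hA0; linear_combination h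
  have eA' : (tlH + ttH) * (lH + tH) - ttH * tH ≠ 0 := by intro h; apply hA0; linear_combination h
  have eBH : (lH + tH) * (pH + tpH) - lH * pH ≠ 0 := by intro h; apply hBH0; linear_combination h
  refine ⟨⟨rfl, ?_⟩, ⟨?_, ?_, rfl, rfl⟩, ⟨?_, ?_⟩, ⟨?_, rfl, ?_⟩, ?_⟩
  · field_simp
    ring
  · field_simp
    linear_combination -hrev1
  · field_simp
    linear_combination hrev1
  · field_simp
    linear_combination -hrev2
  · field_simp
    linear_combination -hrev1
  · field_simp
  · field_simp
  · field_simp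
    linear_combination -hrev2
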